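/- (Proposition 1, feasibility, necessity) Let N ≥ 2, 1/N = p_l < p_h < 1, integers 1 ≤ t < T, and let k₀ = max{k ∈ {0,…,t} : τ_d·μ(k;t) − τ_c·λ(k;t) > 0}. If there exists a feasible intervention rule f : {0,…,t} → [0,1], i.e., one satisfying ((T−t)/T)·Σ_{k=0}^t [τ_d μ(k;t) − τ_c λ(k;t)] f(k) ≥ τ_d − τ_c, then ((T−t)/T)·Σ_{k ≤ k₀} [τ_d·μ(k;t) − τ_c·λ(k;t)] ≥ τ_d − τ_c. -/

import Mathlib

open Finset

/-- `lam N t pl k` is the probability of `k` idle signals out of `t` when all `N`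
users transmit with probability `pl`. -/
noncomputable def lam (N t : ℕ) (pl : ℝ) (k : ℕ) : ℝ :=
  (t.choose k : ℝ) * ((1 - pl) ^ N) ^ k * (1 - (1 - pl) ^ N) ^ (t - k)

/-- `mu N t pl ph k` is the probability of `k` idle signals out of `t` when exactly
one user transmits with probability `ph` and the others with `pl`. -/
noncomputable def mu (N t : ℕ) (pl ph : ℝ) (k : ℕ) : ℝ :=
  (t.choose k : ℝ) * ((1 - pl) ^ (N - 1) * (1 - ph)) ^ k *
    (1 - (1 - pl) ^ (N - 1) * (1 - ph)) ^ (t - k)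

/-- The cooperation throughput `τ_c = pl (1 - pl)^{N-1}`. -/
noncomputable def tauC (N : ℕ) (pl : ℝ) : ℝ := pl * (1 - pl) ^ (N - 1)

/-- The defection throughput `τ_d = ph (1 - pl)^{N-1}`. -/
noncomputable def tauD (N : ℕ) (pl ph : ℝ) : ℝ := ph * (1 - pl) ^ (N - 1)

/-- `f : {0,…,t} → [0,1]` is an intervention rule. -/
def IsRule (t : ℕ) (f : ℕ → ℝ) : Prop := ∀ k ≤ t, 0 ≤ f k ∧ f k ≤ 1

/-- The left-hand side of the incentive constraint:
`((T−t)/T) · Σ_{k=0}^t [τ_d μ(k;t) − τ_c λ(k;t)] f(k)`. -/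
noncomputable def incLHS (N t T : ℕ) (pl ph : ℝ) (f : ℕ → ℝ) : ℝ :=
  (((T : ℝ) - t) / T) * ∑ k ∈ Finset.range (t + 1),
    (tauD N pl ph * mu N t pl ph k - tauC N pl * lam N t pl k) * f k

/-- A feasible solution of the linear program: an intervention rule satisfying the
incentive constraint. -/
def Feasible (N t T : ℕ) (pl ph : ℝ) (f : ℕ → ℝ) : Prop :=
  IsRule t f ∧ incLHS N t T pl ph f ≥ tauD N pl ph - tauC N pl

/-- The objective of the linear program: the expected transmission probability of the
intervention device under cooperation, `Σ_{k=0}^t λ(k;t) f(k)`. -/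
noncomputable def objective (N t : ℕ) (pl : ℝ) (f : ℕ → ℝ) : ℝ :=
  ∑ k ∈ Finset.range (t + 1), lam N t pl k * f k

/-- (Proposition 1, feasibility, necessity) If the linear program has a feasible
solution, then `((T−t)/T)·Σ_{k ≤ k₀} [τ_d μ(k;t) − τ_c λ(k;t)] ≥ τ_d − τ_c`, where
`k₀` is the largest `k ∈ {0,…,t}` with `τ_d μ(k;t) − τ_c λ(k;t) > 0`. -/


lemma key_shift (td tc a b : ℝ) (ha : 0 < a) (hab : a < b) (hb1 : b < 1)
    (htc : 0 ≤ tc) (htd : 0 ≤ td) (m k d : ℕ)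
    (h : tc * (b ^ (k + d) * (1 - b) ^ m) < td * (a ^ (k + d) * (1 - a) ^ m)) :
    tc * (b ^ k * (1 - b) ^ (m + d)) < td * (a ^ k * (1 - a) ^ (m + d)) := by
  have hb0 : 0 < b := ha.trans hab
  have h1b : 0 < 1 - b := by linarith
  have h1a : 0 < 1 - a := by linarith
  have hba : a * (1 - b) < b * (1 - a) := by nlinarith
  have hpow : (a * (1 - b)) ^ d ≤ (b * (1 - a)) ^ d :=
    pow_le_pow_left₀ (by positivity) hba.le d
  have hgpos : 0 < (b * (1 - a)) ^ d := by positivity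
  rw [← mul_lt_mul_iff_left₀ hgpos]
  calc tc * (b ^ k * (1 - b) ^ (m + d)) * (b * (1 - a)) ^ d
      = tc * (b ^ (k + d) * (1 - b) ^ m) * ((1 - a) ^ d * (1 - b) ^ d) := by
        simp only [pow_add, mul_pow]; ring
    _ < td * (a ^ (k + d) * (1 - a) ^ m) * ((1 - a) ^ d * (1 - b) ^ d) :=
        mul_lt_mul_of_pos_right h (by positivity)
    _ = td * (a ^ k * (1 - a) ^ (m + d)) * (a * (1 - b)) ^ d := by
        simp only [pow_add, mul_pow]; ring
    _ ≤ td * (a ^ k * (1 - a) ^ (m + d)) * (b * (1 - a)) ^ d := by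
        apply mul_le_mul_of_nonneg_left hpow
        exact mul_nonneg htd (by positivity)


theorem feasibility_necessary (N t T : ℕ) (pl ph : ℝ) (hN : 2 ≤ N)
    (hpl : pl = 1 / N) (hlh : pl < ph) (hph : ph < 1) (ht : 1 ≤ t) (htT : t < T)
    (k0 : ℕ) (hk0t : k0 ≤ t)
    (hk0pos : 0 < tauD N pl ph * mu N t pl ph k0 - tauC N pl * lam N t pl k0)
    (hk0max : ∀ k ≤ t,
      0 < tauD N pl ph * mu N t pl ph k - tauC N pl * lam N t pl k → k ≤ k0)
    (hfeas : ∃ f : ℕ → ℝ, Feasible N t T pl ph f) :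
    (((T : ℝ) - t) / T) * ∑ k ∈ Finset.range (k0 + 1),
        (tauD N pl ph * mu N t pl ph k - tauC N pl * lam N t pl k)
      ≥ tauD N pl ph - tauC N pl := by
  obtain ⟨f, hrule, hinc⟩ := hfeas
  have hNpos : (0:ℝ) < N := by positivity
  have hpl0 : 0 < pl := by rw [hpl]; positivity
  have hpl1 : pl < 1 := by
    rw [hpl]
    rw [div_lt_one hNpos]
    exact_mod_cast by omega
  have h1pl : 0 < 1 - pl := by linarith
  have h1ph : 0 < 1 - ph := by linarith
  set a : ℝ := (1 - pl) ^ (N - 1) * (1 - ph) with ha_def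
  set b : ℝ := (1 - pl) ^ N with hb_def
  have hba : b = (1 - pl) ^ (N - 1) * (1 - pl) := by
    rw [hb_def, ← pow_succ]
    congr 1
    omega
  have ha0 : 0 < a := by rw [ha_def]; positivity
  have hab : a < b := by
    rw [ha_def, hba]
    apply mul_lt_mul_of_pos_left (by linarith) (by positivity)
  have hb1 : b < 1 := by
    rw [hb_def]
    exact pow_lt_one₀ (by linarith) (by linarith) (by omega)
  have htc0 : 0 < tauC N pl := by unfold tauC; positivity
  have htd0 : 0 < tauD N pl ph := by
    unfold tauD
    have : 0 < ph := lt_trans hpl0 hlh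
    positivity
  -- coefficient positivity for k ≤ k0
  have hmu : ∀ k, mu N t pl ph k = (t.choose k : ℝ) * (a ^ k * (1 - a) ^ (t - k)) := by
    intro k; unfold mu; rw [ha_def]; ring
  have hlam : ∀ k, lam N t pl k = (t.choose k : ℝ) * (b ^ k * (1 - b) ^ (t - k)) := by
    intro k; unfold lam; rw [hb_def]; ring
  have hk0' : tauC N pl * (b ^ k0 * (1 - b) ^ (t - k0))
      < tauD N pl ph * (a ^ k0 * (1 - a) ^ (t - k0)) := by
    have hn0 : (0:ℝ) < (t.choose k0 : ℝ) := by
      exact_mod_cast Nat.choose_pos hk0t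
    rw [hmu, hlam] at hk0pos
    have := hk0pos
    nlinarith [this]
  have hcpos : ∀ k ≤ k0,
      0 < tauD N pl ph * mu N t pl ph k - tauC N pl * lam N t pl k := by
    intro k hk
    have hkt : k ≤ t := le_trans hk hk0t
    have hn : (0:ℝ) < (t.choose k : ℝ) := by exact_mod_cast Nat.choose_pos hkt
    rw [hmu, hlam]
    have hkey : tauC N pl * (b ^ k * (1 - b) ^ (t - k))
        < tauD N pl ph * (a ^ k * (1 - a) ^ (t - k)) := by
      have e1 : k0 = k + (k0 - k) := by omega
      have e2 : t - k = (t - k0) + (k0 - k) := by omega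
      rw [e2]
      apply key_shift _ _ _ _ ha0 hab hb1 htc0.le htd0.le
      rw [← e1]
      have e3 : t - k0 = t - k0 := rfl
      exact hk0'
    nlinarith [hkey]
  have hcneg : ∀ k, k0 < k → k ≤ t →
      tauD N pl ph * mu N t pl ph k - tauC N pl * lam N t pl k ≤ 0 := by
    intro k hk hkt
    by_contra h
    push_neg at h
    exact absurd (hk0max k hkt h) (by omega)
  -- sum comparison
  have hsplit : ∑ k ∈ Finset.range (t + 1),
      (tauD N pl ph * mu N t pl ph k - tauC N pl * lam N t pl k) * f k
      ≤ ∑ k ∈ Finset.range (k0 + 1),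
        (tauD N pl ph * mu N t pl ph k - tauC N pl * lam N t pl k) := by
    rw [← Finset.sum_range_add_sum_Ico _ (by omega : k0 + 1 ≤ t + 1)]
    have h1 : ∑ k ∈ Finset.range (k0 + 1),
        (tauD N pl ph * mu N t pl ph k - tauC N pl * lam N t pl k) * f k
        ≤ ∑ k ∈ Finset.range (k0 + 1),
          (tauD N pl ph * mu N t pl ph k - tauC N pl * lam N t pl k) := by
      apply Finset.sum_le_sum
      intro k hk
      rw [Finset.mem_range] at hk
      have hkk0 : k ≤ k0 := by omega
      have hc := hcpos k hkk0
      have hf := hrule k (le_trans hkk0 hk0t)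
      nlinarith [hc, hf.1, hf.2]
    have h2 : ∑ k ∈ Finset.Ico (k0 + 1) (t + 1),
        (tauD N pl ph * mu N t pl ph k - tauC N pl * lam N t pl k) * f k ≤ 0 := by
      apply Finset.sum_nonpos
      intro k hk
      rw [Finset.mem_Ico] at hk
      have hc := hcneg k (by omega) (by omega)
      have hf := hrule k (by omega)
      exact mul_nonpos_of_nonpos_of_nonneg hc hf.1
    linarith
  have hT0 : (0:ℝ) < (T:ℝ) := by
    have : 0 < T := by omega
    exact_mod_cast this
  have hTt : (0:ℝ) < ((T:ℝ) - t) / T := by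
    apply div_pos _ hT0
    have : (t:ℝ) < T := by exact_mod_cast htT
    linarith
  have := hinc
  unfold incLHS at this
  calc tauD N pl ph - tauC N pl
      ≤ (((T:ℝ) - t) / T) * ∑ k ∈ Finset.range (t + 1),
        (tauD N pl ph * mu N t pl ph k - tauC N pl * lam N t pl k) * f k := this
    _ ≤ _ := mul_le_mul_of_nonneg_left hsplit hTt.le
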